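/- Scale views with coefficient of absolute value at least 2 are not interval bijective: if Var is nonempty and k : Var → ℤ satisfies |k x₀| ≥ 2 for some variable x₀, then for the view given by φ_x(v) = k x * v there exists a domain d with nonempty finite variable domains (for instance d x = {0,1} for all x) such that φ_Asn '' ⟦conv(⟦d⟧)⟧ ≠ ⟦conv(φ_Asn '' ⟦d⟧)⟧. -/
import Mathlib


namespace Stmt17

variable {Var : Type*}

/-- The assignment set of a domain. -/
def asn (d : Var → Set ℤ) : Set (Var → ℤ) := {a | ∀ x, a x ∈ d x}

/-- A view lifted to assignments. -/
def lift (φ : Var → ℤ → ℤ) (a : Var → ℤ) : Var → ℤ := fun x => φ x (a x)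

/-- The strongest convex domain containing a constraint: for a finite nonempty constraint `c`,
`conv c x = Set.Icc (min over a ∈ c of a x) (max over a ∈ c of a x)`, and `conv ∅` is the
empty domain.  (A value lies between the min and the max of `{a x | a ∈ c}` iff it is above
some `a x` and below some `a' x`.) -/
def conv (c : Set (Var → ℤ)) : Var → Set ℤ :=
  fun x => {v | (∃ a ∈ c, a x ≤ v) ∧ (∃ a ∈ c, v ≤ a x)}

/-- Scale views with coefficient of absolute value at least 2 are not interval bijective: if
`|k x₀| ≥ 2` for some variable `x₀`, then for the view `φ_x(v) = k x * v` there is a domain `d`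
with nonempty finite variable domains such that
`φ_Asn '' ⟦conv(⟦d⟧)⟧ ≠ ⟦conv(φ_Asn '' ⟦d⟧)⟧`. -/
theorem scale_not_interval_bijective [Nonempty Var] (k : Var → ℤ)
    (hk : ∃ x₀ : Var, 2 ≤ |k x₀|) :
    ∃ d : Var → Set ℤ, (∀ x, (d x).Nonempty) ∧ (∀ x, (d x).Finite) ∧
      lift (fun x v => k x * v) '' asn (conv (asn d)) ≠
        asn (conv (lift (fun x v => k x * v) '' asn d)) := by
  classical
  obtain ⟨x₀, hk⟩ := hk
  refine ⟨fun _ => {0, 1}, fun x => ⟨0, by simp⟩, fun x => (Set.finite_singleton 1).insert 0, ?_⟩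
  set φ : Var → ℤ → ℤ := fun x v => k x * v with hφ
  set s : ℤ := if 0 ≤ k x₀ then 1 else -1 with hs
  set a : Var → ℤ := fun x => if x = x₀ then k x₀ - s else 0 with ha
  have hc0 : (fun _ : Var => (0 : ℤ)) ∈ asn (fun _ => ({0, 1} : Set ℤ)) := fun x => by simp
  have hc1 : (fun _ : Var => (1 : ℤ)) ∈ asn (fun _ => ({0, 1} : Set ℤ)) := fun x => by simp
  intro h
  -- a belongs to the RHS
  have haR : a ∈ asn (conv (lift φ '' asn (fun _ => ({0, 1} : Set ℤ)))) := by
    intro x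
    by_cases hx : x = x₀
    · subst hx
      constructor
      · by_cases hpos : 0 ≤ k x
        · exact ⟨lift φ (fun _ => 0), ⟨_, hc0, rfl⟩, by
            simp only [lift, ha, hs, hpos, if_true, if_pos rfl, hφ, mul_zero]
            have : 2 ≤ k x := by rw [abs_of_nonneg hpos] at hk; omega
            omega⟩
        · exact ⟨lift φ (fun _ => 1), ⟨_, hc1, rfl⟩, by
            simp only [lift, ha, hs, hpos, if_false, if_pos rfl, hφ, mul_one]
            omega⟩
      · by_cases hpos : 0 ≤ k x
        · exact ⟨lift φ (fun _ => 1), ⟨_, hc1, rfl⟩, by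
            simp only [lift, ha, hs, hpos, if_true, if_pos rfl, hφ, mul_one]
            omega⟩
        · exact ⟨lift φ (fun _ => 0), ⟨_, hc0, rfl⟩, by
            simp only [lift, ha, hs, hpos, if_false, if_pos rfl, hφ, mul_zero]
            have : k x ≤ -2 := by rw [abs_of_neg (by omega)] at hk; omega
            omega⟩
    · refine ⟨⟨lift φ (fun _ => 0), ⟨_, hc0, rfl⟩, ?_⟩, ⟨lift φ (fun _ => 0), ⟨_, hc0, rfl⟩, ?_⟩⟩ <;>
        simp [lift, ha, hx, hφ]
  rw [← h] at haR
  obtain ⟨c, _, hca⟩ := haR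
  have := congrFun hca x₀
  simp only [lift, ha, if_pos rfl, hφ] at this
  -- k x₀ * c x₀ = k x₀ - s, so k x₀ ∣ s, contradicting |k x₀| ≥ 2 and |s| = 1
  have hdvd : k x₀ ∣ s := ⟨1 - c x₀, by ring_nf; omega⟩
  have hs1 : s = 1 ∨ s = -1 := by rw [hs]; split <;> simp
  have hkd : k x₀ ∣ 1 := by
    rcases hs1 with h1 | h1 <;> rw [h1] at hdvd
    · exact hdvd
    · exact dvd_neg.mp hdvd
  have := Int.le_of_dvd one_pos hkd
  have := Int.le_of_dvd one_pos hkd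
  rcases Int.isUnit_iff.mp (isUnit_of_dvd_one hkd) with h1 | h1 <;> rw [h1] at hk <;> simp at hk

end Stmt17
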